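/- Let Ω ⊂ ℝ^N be open and bounded, p ∈ [2,N), let u_n → u_0 pointwise a.e. in Ω and ∇u_n ⇀ ∇u_0 weakly in L^p(Ω), let 𝒜_+ ∈ L^∞(Ω) satisfy λ ≤ 𝒜_+ ≤ Λ. Then ∫_{Ω ∩ {u_0 > 0}} 𝒜_+(x)|∇u_0|^p dx ≤ liminf_{n→∞} ∫_{Ω ∩ {u_n > 0}} 𝒜_+(x)|∇u_n|^p dx. -/

import Mathlib

open MeasureTheory Metric Set Filter Topology
open scoped ENNReal RealInnerProductSpace

noncomputable section

abbrev Euc (N : ℕ) := EuclideanSpace ℝ (Fin N)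

/-- `Du` is a weak gradient of `u` on `Ω`. -/
def IsWeakGradOn {N : ℕ} (Ω : Set (Euc N)) (u : Euc N → ℝ) (Du : Euc N → Euc N) : Prop :=
  ∀ φ : Euc N → ℝ, ContDiff ℝ 1 φ → HasCompactSupport φ → tsupport φ ⊆ Ω →
    ∫ x in Ω, u x • gradient φ x = - ∫ x in Ω, φ x • Du x

/-- `u ∈ W^{1,p}(Ω)` with weak gradient `Du`. -/
def MemW1p {N : ℕ} (p : ℝ) (Ω : Set (Euc N)) (u : Euc N → ℝ) (Du : Euc N → Euc N) : Prop :=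
  MemLp u (ENNReal.ofReal p) (volume.restrict Ω) ∧
  MemLp Du (ENNReal.ofReal p) (volume.restrict Ω) ∧
  IsWeakGradOn Ω u Du

/-- `u ∈ W^{1,p}_0(Ω)`: the extension of `u` by zero is weakly differentiable on all of `ℝ^N`,
with weak gradient the extension of `Du` by zero. -/
def MemW1pZero {N : ℕ} (p : ℝ) (Ω : Set (Euc N)) (u : Euc N → ℝ) (Du : Euc N → Euc N) : Prop :=
  MemW1p p Ω u Du ∧ IsWeakGradOn univ (Ω.indicator u) (Ω.indicator Du)

/-- The transmission functional `F(v) = ∫_Ω 𝒜(x,v)|∇v|^p − f(x,v) v + γ(x,v) dx`. -/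
def Fval {N : ℕ} (p : ℝ) (Ω : Set (Euc N)) (Ap Am fp fm gp gm : Euc N → ℝ)
    (u : Euc N → ℝ) (Du : Euc N → Euc N) : ℝ :=
  ∫ x in Ω, ((if 0 < u x then Ap x else Am x) * ‖Du x‖ ^ p
    - (if 0 < u x then fp x else fm x) * u x
    + (if 0 < u x then gp x else gm x))

/-- Membership in `W^{1,p}_φ(Ω)`. -/
def AdmissibleBd {N : ℕ} (p : ℝ) (Ω : Set (Euc N)) (φ : Euc N → ℝ) (Dφ : Euc N → Euc N)
    (u : Euc N → ℝ) (Du : Euc N → Euc N) : Prop :=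
  MemW1p p Ω u Du ∧ MemW1pZero p Ω (u - φ) (Du - Dφ)

/-- Density ratio of a set `E` at `x` at scale `r`. -/
def densRatio {N : ℕ} (E : Set (Euc N)) (x : Euc N) (r : ℝ) : ℝ≥0∞ :=
  volume (E ∩ ball x r) / volume (ball x r)

/-- The essential (measure-theoretic) boundary of `E`: points at which `E` has neither
density one nor density zero. -/
def essBoundary {N : ℕ} (E : Set (Euc N)) : Set (Euc N) :=
  {x | ¬ Tendsto (densRatio E x) (𝓝[>] 0) (𝓝 1) ∧ ¬ Tendsto (densRatio E x) (𝓝[>] 0) (𝓝 0)}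

/-- Perimeter of `E` relative to `Ω`, as the `ℋ^{N-1}` measure of the essential boundary. -/
def perim {N : ℕ} (Ω E : Set (Euc N)) : ℝ≥0∞ :=
  μH[(N : ℝ) - 1] (essBoundary E ∩ Ω)

lemma rpow_mul_self' {a : ℝ} (ha : 0 ≤ a) {q : ℝ} (hq : q + 1 ≠ 0) :
    a ^ q * a = a ^ (q + 1) := by
  rcases eq_or_lt_of_le ha with h | h
  · rw [← h, Real.zero_rpow hq, mul_zero]
  · rw [Real.rpow_add h, Real.rpow_one]

lemma rpow_sub_two_mul_sq {a : ℝ} (ha : 0 ≤ a) {p : ℝ} (hp : 1 < p) :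
    a ^ (p - 2) * (a * a) = a ^ p := by
  have h1 : a ^ (p - 2) * a = a ^ (p - 1) := by
    have := rpow_mul_self' ha (q := p - 2) (by intro h; nlinarith)
    rwa [show p - 2 + 1 = p - 1 by ring] at this
  have h2 : a ^ (p - 1) * a = a ^ p := by
    have := rpow_mul_self' ha (q := p - 1) (by intro h; nlinarith)
    rwa [show p - 1 + 1 = p by ring] at this
  calc a ^ (p - 2) * (a * a) = a ^ (p - 2) * a * a := by ring
    _ = a ^ (p - 1) * a := by rw [h1]
    _ = a ^ p := h2

lemma norm_smul_rpow {N : ℕ} {p : ℝ} (hp : 1 < p) (v : Euc N) :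
    ‖(‖v‖ ^ (p - 2)) • v‖ = ‖v‖ ^ (p - 1) := by
  rw [norm_smul, Real.norm_eq_abs, abs_of_nonneg (Real.rpow_nonneg (norm_nonneg _) _)]
  have := rpow_mul_self' (norm_nonneg v) (q := p - 2) (by intro h; nlinarith)
  rwa [show p - 2 + 1 = p - 1 by ring] at this

lemma inner_smul_self_rpow {N : ℕ} {p : ℝ} (hp : 1 < p) (v : Euc N) :
    ⟪v, (‖v‖ ^ (p - 2)) • v⟫ = ‖v‖ ^ p := by
  rw [real_inner_smul_right, real_inner_self_eq_norm_mul_norm]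
  exact rpow_sub_two_mul_sq (norm_nonneg v) hp

lemma tangent_ineq {N : ℕ} {p : ℝ} (hp : 1 < p) (η ξ : Euc N) :
    ‖η‖ ^ p + p * (‖η‖ ^ (p - 2) * (⟪η, ξ⟫ - ⟪η, η⟫)) ≤ ‖ξ‖ ^ p := by
  have hp0 : (0 : ℝ) < p := by linarith
  by_cases hη : η = 0
  · simp only [hη, inner_zero_left, norm_zero, sub_zero, mul_zero, add_zero,
      Real.zero_rpow hp0.ne']
    exact Real.rpow_nonneg (norm_nonneg _) _
  · have ha : 0 < ‖η‖ := norm_pos_iff.mpr hη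
    have hb : 0 ≤ ‖ξ‖ := norm_nonneg _
    set a := ‖η‖ with hadef
    set b := ‖ξ‖ with hbdef
    have hinner : ⟪η, ξ⟫ - ⟪η, η⟫ ≤ a * b - a * a := by
      have h1 : ⟪η, ξ⟫ ≤ a * b := real_inner_le_norm η ξ
      have h2 : ⟪η, η⟫ = a * a := real_inner_self_eq_norm_mul_norm η
      linarith
    have hstep : a ^ p + p * (a ^ (p - 2) * (⟪η, ξ⟫ - ⟪η, η⟫)) ≤
        a ^ p + p * (a ^ (p - 2) * (a * b - a * a)) := by
      have hpow : (0 : ℝ) ≤ a ^ (p - 2) := Real.rpow_nonneg ha.le _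
      nlinarith [mul_le_mul_of_nonneg_left hinner hpow]
    refine hstep.trans ?_
    have e1 : a ^ (p - 2) * (a * b - a * a) = a ^ (p - 1) * b - a ^ p := by
      have h1 : a ^ (p - 2) * a = a ^ (p - 1) := by
        have := rpow_mul_self' ha.le (q := p - 2) (by intro h; nlinarith)
        rwa [show p - 2 + 1 = p - 1 by ring] at this
      have h2 : a ^ (p - 2) * (a * a) = a ^ p := rpow_sub_two_mul_sq ha.le hp
      nlinarith [h1, h2]
    rw [e1]
    -- Young's inequality : a^(p-1) * b ≤ (a^(p-1))^q / q + b^p / p with q = p/(p-1)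
    have hq : (p / (p - 1)).HolderConjugate p :=
      (Real.HolderConjugate.conjExponent hp).symm
    have hy := Real.young_inequality_of_nonneg
      (Real.rpow_nonneg ha.le (p - 1)) hb hq
    have e2 : (a ^ (p - 1)) ^ (p / (p - 1)) = a ^ p := by
      rw [← Real.rpow_mul ha.le]
      congr 1
      rw [mul_comm]
      exact div_mul_cancel₀ p (by linarith : p - 1 ≠ 0)
    rw [e2] at hy
    have hdiv : a ^ p / (p / (p - 1)) = a ^ p * (p - 1) / p := by
      rw [div_div_eq_mul_div, mul_comm]
    rw [hdiv] at hy
    have hy2 : p * (a ^ (p - 1) * b) ≤ a ^ p * (p - 1) + b ^ p := by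
      have h := mul_le_mul_of_nonneg_left hy hp0.le
      have e3 : p * (a ^ p * (p - 1) / p + b ^ p / p) = a ^ p * (p - 1) + b ^ p := by
        field_simp
      linarith [h, e3.le, e3.ge]
    linarith [hy2]

lemma integrable_norm_mul_pair {N : ℕ} {μ : Measure (Euc N)} {p q : ℝ}
    (hpq : p.HolderConjugate q) {f g : Euc N → Euc N}
    (hf : MemLp f (ENNReal.ofReal p) μ) (hg : MemLp g (ENNReal.ofReal q) μ) :
    Integrable (fun x => ‖f x‖ * ‖g x‖) μ := by
  have hfp : Integrable (fun x => ‖f x‖ ^ p) μ := by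
    have := hf.integrable_norm_rpow (by simp [hpq.pos]) ENNReal.ofReal_ne_top
    rwa [ENNReal.toReal_ofReal hpq.nonneg] at this
  have hgq : Integrable (fun x => ‖g x‖ ^ q) μ := by
    have := hg.integrable_norm_rpow (by simp [hpq.symm.pos]) ENNReal.ofReal_ne_top
    rwa [ENNReal.toReal_ofReal hpq.symm.nonneg] at this
  refine ((hfp.div_const p).add (hgq.div_const q)).mono'
    (hf.1.norm.mul hg.1.norm) ?_
  refine Eventually.of_forall fun x => ?_
  have hy := Real.young_inequality_of_nonneg (norm_nonneg (f x)) (norm_nonneg (g x)) hpq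
  rw [Real.norm_eq_abs, abs_of_nonneg (mul_nonneg (norm_nonneg _) (norm_nonneg _))]
  exact hy

lemma integrable_inner_pair {N : ℕ} {μ : Measure (Euc N)} {p q : ℝ}
    (hpq : p.HolderConjugate q) {f g : Euc N → Euc N}
    (hf : MemLp f (ENNReal.ofReal p) μ) (hg : MemLp g (ENNReal.ofReal q) μ) :
    Integrable (fun x => ⟪f x, g x⟫) μ := by
  refine (integrable_norm_mul_pair hpq hf hg).mono' (hf.1.inner hg.1) ?_
  refine Eventually.of_forall fun x => ?_
  rw [Real.norm_eq_abs]
  exact abs_real_inner_le_norm _ _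

set_option maxHeartbeats 1000000 in
lemma exists_pairing_bound {N : ℕ} (μ : Measure (Euc N)) {p q : ℝ} (hpq : p.HolderConjugate q)
    (Du : ℕ → Euc N → Euc N) (hDu : ∀ n, MemLp (Du n) (ENNReal.ofReal p) μ)
    (hweak : ∀ g : Euc N → Euc N, MemLp g (ENNReal.ofReal q) μ →
      ∃ c : ℝ, Tendsto (fun n => ∫ x, ⟪Du n x, g x⟫ ∂μ) atTop (𝓝 c)) :
    ∃ C : ℝ, ∀ n, ∫ x, ‖Du n x‖ ^ p ∂μ ≤ C := by
  haveI : Fact (1 ≤ ENNReal.ofReal q) := ⟨ENNReal.one_le_ofReal.mpr hpq.symm.lt.le⟩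
  set Q := ENNReal.ofReal q with hQ
  have hQ0 : Q ≠ 0 := by simp [hQ, hpq.symm.pos]
  have hQt : Q ≠ ∞ := ENNReal.ofReal_ne_top
  have hqtoReal : Q.toReal = q := ENNReal.toReal_ofReal hpq.symm.nonneg
  have hnorm : ∀ g : Lp (Euc N) Q μ, ‖g‖ = (∫ x, ‖g x‖ ^ q ∂μ) ^ (1/q) := by
    intro g
    rw [Lp.norm_def, MemLp.eLpNorm_eq_integral_rpow_norm hQ0 hQt (Lp.memLp g), hqtoReal,
      ENNReal.toReal_ofReal (Real.rpow_nonneg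
        (integral_nonneg fun x => Real.rpow_nonneg (norm_nonneg _) _) _), one_div]
  have hbound : ∀ n (g : Lp (Euc N) Q μ), ‖∫ x, ⟪Du n x, g x⟫ ∂μ‖ ≤
      ((∫ x, ‖Du n x‖ ^ p ∂μ) ^ (1/p)) * ‖g‖ := by
    intro n g
    calc ‖∫ x, ⟪Du n x, g x⟫ ∂μ‖ ≤ ∫ x, ‖⟪Du n x, g x⟫‖ ∂μ :=
      norm_integral_le_integral_norm _
    _ ≤ ∫ x, ‖Du n x‖ * ‖g x‖ ∂μ := by
        refine integral_mono_ae (integrable_inner_pair hpq (hDu n) (Lp.memLp g)).norm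
          (integrable_norm_mul_pair hpq (hDu n) (Lp.memLp g)) ?_
        exact Eventually.of_forall fun x => by
          simpa [Real.norm_eq_abs] using abs_real_inner_le_norm (Du n x) (g x)
    _ ≤ _ := by rw [hnorm g]; exact integral_mul_norm_le_Lp_mul_Lq hpq (hDu n) (Lp.memLp g)
  set T : ℕ → Lp (Euc N) Q μ →L[ℝ] ℝ := fun n =>
    LinearMap.mkContinuous
      { toFun := fun g => ∫ x, ⟪Du n x, g x⟫ ∂μ
        map_add' := fun g h => by
          rw [← integral_add (integrable_inner_pair hpq (hDu n) (Lp.memLp g))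
              (integrable_inner_pair hpq (hDu n) (Lp.memLp h))]
          refine integral_congr_ae ?_
          filter_upwards [Lp.coeFn_add g h] with x hx
          rw [hx, Pi.add_apply, inner_add_right]
        map_smul' := fun c g => by
          rw [RingHom.id_apply, ← integral_smul]
          refine integral_congr_ae ?_
          filter_upwards [Lp.coeFn_smul c g] with x hx
          rw [hx, Pi.smul_apply, real_inner_smul_right, smul_eq_mul] }
      ((∫ x, ‖Du n x‖ ^ p ∂μ) ^ (1/p)) (fun g => hbound n g) with hT
  have hptwise : ∀ g : Lp (Euc N) Q μ, ∃ C0, ∀ n, ‖T n g‖ ≤ C0 := by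
    intro g
    obtain ⟨c, hc⟩ := hweak g (Lp.memLp g)
    obtain ⟨C0, hC0⟩ := hc.norm.bddAbove_range
    exact ⟨C0, fun n => hC0 ⟨n, rfl⟩⟩
  have hBS : ∀ g : Lp (Euc N) Q μ, ∃ C0, ∀ n, ‖T n g‖ ≤ C0 := hptwise
  obtain ⟨C', hC'⟩ := banach_steinhaus hBS
  have hC'0 : 0 ≤ C' := le_trans (norm_nonneg (T 0)) (hC' 0)
  refine ⟨max 1 (C' ^ p), fun n => ?_⟩
  set J := ∫ x, ‖Du n x‖ ^ p ∂μ with hJdef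
  have hJ0 : 0 ≤ J := integral_nonneg fun x => Real.rpow_nonneg (norm_nonneg _) _
  set G : Euc N → Euc N := fun x => (‖Du n x‖ ^ (p - 2)) • Du n x with hG
  have hGnorm : ∀ x, ‖G x‖ = ‖Du n x‖ ^ (p - 1) := fun x => norm_smul_rpow hpq.lt _
  have hGmem : MemLp G Q μ := by
    have h1 := (hDu n).norm_rpow_div (ENNReal.ofReal (p - 1))
    rw [ENNReal.toReal_ofReal (by linarith [hpq.lt] : (0:ℝ) ≤ p - 1)] at h1
    have h2 : ENNReal.ofReal p / ENNReal.ofReal (p - 1) = Q := by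
      rw [hQ, hpq.conjugate_eq, ENNReal.ofReal_div_of_pos hpq.sub_one_pos]
    rw [h2] at h1
    refine h1.of_le (((hDu n).1.norm.aemeasurable.pow_const _).aestronglyMeasurable.smul
      (hDu n).1) (Eventually.of_forall fun x => ?_)
    exact le_of_eq (by rw [hGnorm x, Real.norm_eq_abs,
      abs_of_nonneg (Real.rpow_nonneg (norm_nonneg _) _)])
  have hGq : ∀ x, ‖G x‖ ^ q = ‖Du n x‖ ^ p := by
    intro x
    rw [hGnorm x, ← Real.rpow_mul (norm_nonneg _), hpq.sub_one_mul_conj]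
  have hTg : T n (hGmem.toLp G) = J := by
    have : T n (hGmem.toLp G) = ∫ x, ⟪Du n x, (hGmem.toLp G : Euc N → Euc N) x⟫ ∂μ := rfl
    rw [this]
    refine integral_congr_ae ?_
    filter_upwards [hGmem.coeFn_toLp] with x hx
    rw [hx]
    exact inner_smul_self_rpow hpq.lt _
  have hgnorm : ‖hGmem.toLp G‖ = J ^ (1/q) := by
    rw [hnorm]
    congr 1
    refine integral_congr_ae ?_
    filter_upwards [hGmem.coeFn_toLp] with x hx
    rw [hx]
    exact hGq x
  have hle : J ≤ C' * J ^ (1/q) := by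
    calc J = ‖T n (hGmem.toLp G)‖ := by rw [hTg, Real.norm_eq_abs, abs_of_nonneg hJ0]
    _ ≤ ‖T n‖ * ‖hGmem.toLp G‖ := (T n).le_opNorm _
    _ ≤ C' * J ^ (1/q) := by
        rw [hgnorm]
        exact mul_le_mul_of_nonneg_right (hC' n) (Real.rpow_nonneg hJ0 _)
  by_cases hJ1 : J ≤ 1
  · exact hJ1.trans (le_max_left _ _)
  · push_neg at hJ1
    have hJpos : 0 < J := by linarith
    have hsplit : J = J ^ (1/p) * J ^ (1/q) := by
      rw [← Real.rpow_add hJpos, one_div, one_div, hpq.inv_add_inv_eq_one, Real.rpow_one]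
    have h1 : J ^ (1/p) ≤ C' := by
      have h2 : J ^ (1/p) * J ^ (1/q) ≤ C' * J ^ (1/q) := by rw [← hsplit]; exact hle
      exact le_of_mul_le_mul_right h2 (Real.rpow_pos_of_pos hJpos _)
    have h3 : (J ^ (1/p)) ^ p ≤ C' ^ p :=
      Real.rpow_le_rpow (Real.rpow_nonneg hJ0 _) h1 hpq.nonneg
    have h4 : (J ^ (1/p)) ^ p = J := by
      rw [← Real.rpow_mul hJ0, one_div, inv_mul_cancel₀ hpq.ne_zero, Real.rpow_one]
    rw [h4] at h3
    exact h3.trans (le_max_right _ _)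

set_option maxHeartbeats 1000000 in
/-- Lower semicontinuity of the positive-phase Dirichlet energy under pointwise a.e.
convergence of `u_n` and weak `L^p` convergence of the gradients. -/
theorem stmt_4 (N : ℕ) (Ω : Set (Euc N)) (hΩo : IsOpen Ω) (hΩb : Bornology.IsBounded Ω)
    (p : ℝ) (hp2 : 2 ≤ p) (hpN : p < N)
    (lam Lam : ℝ) (hlam : 0 < lam) (hlL : lam ≤ Lam)
    (Ap : Euc N → ℝ)
    (hApm : MemLp Ap ⊤ (volume.restrict Ω))
    (hAp : ∀ᵐ x ∂(volume.restrict Ω), lam ≤ Ap x ∧ Ap x ≤ Lam)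
    (u : ℕ → Euc N → ℝ) (u₀ : Euc N → ℝ)
    (Du : ℕ → Euc N → Euc N) (Du₀ : Euc N → Euc N)
    (hmeas : ∀ n, AEStronglyMeasurable (u n) (volume.restrict Ω))
    (hmeas₀ : AEStronglyMeasurable u₀ (volume.restrict Ω))
    (hDu : ∀ n, MemLp (Du n) (ENNReal.ofReal p) (volume.restrict Ω))
    (hDu₀ : MemLp Du₀ (ENNReal.ofReal p) (volume.restrict Ω))
    (hae : ∀ᵐ x ∂(volume.restrict Ω), Tendsto (fun n => u n x) atTop (𝓝 (u₀ x)))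
    (hweak : ∀ g : Euc N → Euc N,
      MemLp g (ENNReal.ofReal (p / (p - 1))) (volume.restrict Ω) →
      Tendsto (fun n => ∫ x in Ω, ⟪Du n x, g x⟫) atTop (𝓝 (∫ x in Ω, ⟪Du₀ x, g x⟫))) :
    ∫ x in Ω ∩ {x | 0 < u₀ x}, Ap x * ‖Du₀ x‖ ^ p ≤
      liminf (fun n => ∫ x in Ω ∩ {x | 0 < u n x}, Ap x * ‖Du n x‖ ^ p) atTop := by
  classical
  have hp1 : (1 : ℝ) < p := by linarith
  have hΩm : MeasurableSet Ω := hΩo.measurableSet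
  set μ := volume.restrict Ω with hμ
  haveI hμfin : IsFiniteMeasure μ := by
    constructor
    rw [hμ, Measure.restrict_apply_univ]
    exact hΩb.measure_lt_top
  set P := ENNReal.ofReal p with hP
  have hpq : p.HolderConjugate (p / (p - 1)) := Real.HolderConjugate.conjExponent hp1
  set q := p / (p - 1) with hq
  set L : ℕ → ℝ := fun n => ∫ x in Ω ∩ {x | 0 < u n x}, Ap x * ‖Du n x‖ ^ p with hL
  -- basic facts about the weight
  have hApSM : AEStronglyMeasurable Ap μ := hApm.aestronglyMeasurable
  have hApBound : ∀ᵐ x ∂μ, ‖Ap x‖ ≤ Lam := by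
    filter_upwards [hAp] with x hx
    rw [Real.norm_eq_abs, abs_of_nonneg (le_trans hlam.le hx.1)]
    exact hx.2
  have hApos : ∀ᵐ x ∂μ, 0 ≤ Ap x := by
    filter_upwards [hAp] with x hx; linarith [hx.1]
  have hIntNorm : ∀ (v : Euc N → Euc N), MemLp v P μ →
      Integrable (fun x => ‖v x‖ ^ p) μ := by
    intro v hv
    have := hv.integrable_norm_rpow (by rw [hP]; simp; linarith) ENNReal.ofReal_ne_top
    rwa [hP, ENNReal.toReal_ofReal (by linarith : (0:ℝ) ≤ p)] at this
  have hInt : ∀ (v : Euc N → Euc N), MemLp v P μ →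
      Integrable (fun x => Ap x * ‖v x‖ ^ p) μ := by
    intro v hv
    exact (hIntNorm v hv).bdd_mul hApSM hApBound
  have hnonneg : ∀ (v : Euc N → Euc N) (s : Set (Euc N)), s ⊆ Ω →
      0 ≤ᵐ[volume.restrict s] (fun x => Ap x * ‖v x‖ ^ p) := by
    intro v s hs
    filter_upwards [(ae_mono (Measure.restrict_mono hs le_rfl)) hApos] with x hx
    exact mul_nonneg hx (Real.rpow_nonneg (norm_nonneg _) _)
  have hIntOn : ∀ (v : Euc N → Euc N), MemLp v P μ → ∀ s : Set (Euc N), s ⊆ Ω →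
      IntegrableOn (fun x => Ap x * ‖v x‖ ^ p) s volume := by
    intro v hv s hs
    exact (hInt v hv).mono_measure (Measure.restrict_mono hs le_rfl)
  -- uniform bound on L via Banach-Steinhaus
  obtain ⟨CJ, hCJ⟩ := exists_pairing_bound μ hpq Du hDu
    (fun g hg => ⟨∫ x in Ω, ⟪Du₀ x, g x⟫, hweak g hg⟩)
  have hLbdd : ∀ n, L n ≤ Lam * CJ := by
    intro n
    have s1 : L n ≤ ∫ x in Ω, Ap x * ‖Du n x‖ ^ p := by
      refine setIntegral_mono_set (hIntOn _ (hDu n) Ω subset_rfl)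
        (hnonneg _ Ω subset_rfl) ?_
      exact HasSubset.Subset.eventuallyLE inter_subset_left
    have s2 : ∫ x in Ω, Ap x * ‖Du n x‖ ^ p ≤ ∫ x in Ω, Lam * ‖Du n x‖ ^ p := by
      refine integral_mono_ae (hInt _ (hDu n)) ((hIntNorm _ (hDu n)).const_mul Lam) ?_
      filter_upwards [hAp] with x hx
      exact mul_le_mul_of_nonneg_right hx.2 (Real.rpow_nonneg (norm_nonneg _) _)
    have s3 : ∫ x in Ω, Lam * ‖Du n x‖ ^ p = Lam * ∫ x in Ω, ‖Du n x‖ ^ p :=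
      integral_const_mul _ _
    have s4 : Lam * ∫ x in Ω, ‖Du n x‖ ^ p ≤ Lam * CJ :=
      mul_le_mul_of_nonneg_left (hCJ n) (by linarith)
    linarith
  have hLcob : IsCoboundedUnder (· ≥ ·) atTop L :=
    (Filter.isBoundedUnder_of ⟨Lam * CJ, fun n => hLbdd n⟩).isCoboundedUnder_ge
  -- measurable versions of u n and u₀
  set u' : ℕ → Euc N → ℝ := fun n => (hmeas n).mk (u n) with hu'
  have hu'm : ∀ n, StronglyMeasurable (u' n) := fun n => (hmeas n).stronglyMeasurable_mk
  set u₀' : Euc N → ℝ := hmeas₀.mk u₀ with hu₀'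
  have hu₀'m : StronglyMeasurable u₀' := hmeas₀.stronglyMeasurable_mk
  have hgood : ∀ᵐ x ∂μ, (Tendsto (fun n => u n x) atTop (𝓝 (u₀ x))) ∧
      (∀ n, u n x = u' n x) ∧ u₀ x = u₀' x := by
    have h1 : ∀ᵐ x ∂μ, ∀ n, u n x = u' n x := ae_all_iff.mpr fun n => (hmeas n).ae_eq_mk
    filter_upwards [hae, h1, hmeas₀.ae_eq_mk] with x hx1 hx2 hx3 using ⟨hx1, hx2, hx3⟩
  set Wset : Set (Euc N) := {x | ¬ ((Tendsto (fun n => u n x) atTop (𝓝 (u₀ x))) ∧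
      (∀ n, u n x = u' n x) ∧ u₀ x = u₀' x)} with hW
  set Z := toMeasurable μ Wset with hZ
  have hZm : MeasurableSet Z := measurableSet_toMeasurable μ Wset
  have hZ0 : μ Z = 0 := by rw [hZ, measure_toMeasurable]; exact ae_iff.mp hgood
  set S := Ω \ Z with hS
  have hSm : MeasurableSet S := hΩm.diff hZm
  have hSΩ : S ⊆ Ω := diff_subset
  have hSgood : ∀ x ∈ S, (Tendsto (fun n => u n x) atTop (𝓝 (u₀ x))) ∧
      (∀ n, u n x = u' n x) ∧ u₀ x = u₀' x := by
    intro x hx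
    by_contra h
    exact hx.2 (subset_toMeasurable μ Wset h)
  have hSμ : μ S ≠ ∞ := measure_ne_top μ S
  -- Egorov
  have hEg : ∀ j : ℕ, ∃ t, t ⊆ S ∧ MeasurableSet t ∧ μ t ≤ ENNReal.ofReal (1/(j+1)) ∧
      TendstoUniformlyOn u' u₀' atTop (S \ t) := by
    intro j
    refine tendstoUniformlyOn_of_ae_tendsto hu'm hu₀'m hSm hSμ ?_ (by positivity)
    refine Eventually.of_forall fun x hx => ?_
    obtain ⟨h1, h2, h3⟩ := hSgood x hx
    have he : (fun n => u' n x) = fun n => u n x := funext fun n => (h2 n).symm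
    rw [he, ← h3]
    exact h1
  choose t ht1 ht2 ht3 ht4 using hEg
  set C : ℕ → Set (Euc N) := fun j => S \ t j with hC
  have hCm : ∀ j, MeasurableSet (C j) := fun j => hSm.diff (ht2 j)
  have hCS : ∀ j, C j ⊆ S := fun j => diff_subset
  set A : ℕ → Set (Euc N) := fun k => ⋃ (j : ℕ) (_ : j ≤ k), C j with hA
  have hAm : ∀ k, MeasurableSet (A k) :=
    fun k => MeasurableSet.iUnion fun j => MeasurableSet.iUnion fun _ => hCm j
  have hAmono : Monotone A := by
    intro k k' hkk'
    exact iUnion_mono fun j => iUnion_subset fun hj => subset_iUnion_of_subset (le_trans hj hkk') (by simp)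
  have hAS : ∀ k, A k ⊆ S := fun k => iUnion_subset fun j => iUnion_subset fun _ => hCS j
  set B : ℕ → Set (Euc N) := fun k => A k ∩ {x | 1/((k:ℝ)+1) < u₀' x} with hB
  have hBm : ∀ k, MeasurableSet (B k) := by
    intro k
    exact (hAm k).inter (hu₀'m.measurable measurableSet_Ioi)
  have hBmono : Monotone B := by
    intro k k' hkk'
    refine inter_subset_inter (hAmono hkk') ?_
    intro x hx
    have h7 : 1/((k':ℝ)+1) ≤ 1/((k:ℝ)+1) := by
      apply one_div_le_one_div_of_le
      · positivity
      · have : (k:ℝ) ≤ (k':ℝ) := Nat.cast_le.mpr hkk'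
        linarith
    exact lt_of_le_of_lt h7 hx
  have hBS : ∀ k, B k ⊆ S := fun k => (inter_subset_left).trans (hAS k)
  have hBΩ : ∀ k, B k ⊆ Ω := fun k => (hBS k).trans hSΩ
  set U := ⋃ k, B k with hU
  have hUm : MeasurableSet U := MeasurableSet.iUnion hBm
  have hUsub : U ⊆ Ω ∩ {x | 0 < u₀ x} := by
    intro x hx
    obtain ⟨k, hk⟩ := mem_iUnion.mp hx
    have hxS : x ∈ S := hBS k hk
    refine ⟨hSΩ hxS, ?_⟩
    have h3 := (hSgood x hxS).2.2
    have hpos : 1/((k:ℝ)+1) < u₀' x := hk.2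
    have : (0:ℝ) < 1/((k:ℝ)+1) := by positivity
    show 0 < u₀ x
    rw [h3]
    linarith
  have hZvol : volume (Z ∩ Ω) = 0 := by
    rw [← Measure.restrict_apply hZm, ← hμ]
    exact hZ0
  have hCap : volume (S \ ⋃ j, C j) = 0 := by
    have hsub : S \ (⋃ j, C j) ⊆ ⋂ j, t j := by
      intro x hx
      simp only [mem_iInter]
      intro j
      by_contra hxt
      exact hx.2 (mem_iUnion.mpr ⟨j, hx.1, hxt⟩)
    have him : MeasurableSet (⋂ j, t j) := MeasurableSet.iInter ht2
    have hvol : volume (⋂ j, t j) = 0 := by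
      have heq : volume (⋂ j, t j) = μ (⋂ j, t j) := by
        rw [hμ, Measure.restrict_apply him,
          inter_eq_self_of_subset_left (((iInter_subset t 0)).trans ((ht1 0).trans hSΩ))]
      rw [heq]
      refine le_antisymm ?_ zero_le
      have hle : ∀ j : ℕ, μ (⋂ i, t i) ≤ ENNReal.ofReal (1/((j:ℝ)+1)) :=
        fun j => le_trans (measure_mono (iInter_subset _ j)) (ht3 j)
      have htend : Tendsto (fun j : ℕ => ENNReal.ofReal (1/((j:ℝ)+1))) atTop (𝓝 0) := by
        rw [← ENNReal.ofReal_zero]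
        exact (ENNReal.continuous_ofReal.tendsto 0).comp tendsto_one_div_add_atTop_nhds_zero_nat
      exact ge_of_tendsto' htend hle
    exact measure_mono_null hsub hvol
  have hae_eq : (Ω ∩ {x | 0 < u₀ x} : Set (Euc N)) =ᵐ[volume] U := by
    have hbad : volume ((Z ∩ Ω) ∪ (S \ ⋃ j, C j)) = 0 := measure_union_null hZvol hCap
    have h0 : ∀ᵐ x ∂volume, x ∉ (Z ∩ Ω) ∪ (S \ ⋃ j, C j) := by
      have hcc : {x : Euc N | ¬ x ∉ (Z ∩ Ω) ∪ (S \ ⋃ j, C j)} =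
          (Z ∩ Ω) ∪ (S \ ⋃ j, C j) := by
        ext x; simp only [mem_setOf_eq, not_not]
      rw [ae_iff, hcc]
      exact hbad
    rw [Filter.eventuallyEq_set]
    filter_upwards [h0] with x hx
    constructor
    · intro hxΩE
      have hxZ : x ∉ Z := by
        intro hxZ
        exact hx (Or.inl ⟨hxZ, hxΩE.1⟩)
      have hxS : x ∈ S := ⟨hxΩE.1, hxZ⟩
      have hxC : x ∈ ⋃ j, C j := by
        by_contra hxC
        exact hx (Or.inr ⟨hxS, hxC⟩)
      obtain ⟨j, hj⟩ := mem_iUnion.mp hxC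
      have h3 := (hSgood x hxS).2.2
      have hpos : 0 < u₀' x := by rw [← h3]; exact hxΩE.2
      obtain ⟨m, hm⟩ := exists_nat_one_div_lt hpos
      refine mem_iUnion.mpr ⟨max j m, ⟨?_, ?_⟩⟩
      · exact mem_iUnion.mpr ⟨j, mem_iUnion.mpr ⟨le_max_left j m, hj⟩⟩
      · show 1/(((max j m : ℕ):ℝ)+1) < u₀' x
        have hcast : ((m:ℕ):ℝ) ≤ ((max j m : ℕ):ℝ) := Nat.cast_le.mpr (le_max_right j m)
        have h8 : 1/(((max j m : ℕ):ℝ)+1) ≤ 1/(((m:ℕ):ℝ)+1) := by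
          apply one_div_le_one_div_of_le
          · positivity
          · linarith
        exact lt_of_le_of_lt h8 hm
    · intro hxU
      exact hUsub hxU
  have hLHS : ∫ x in Ω ∩ {x | 0 < u₀ x}, Ap x * ‖Du₀ x‖ ^ p =
      ∫ x in U, Ap x * ‖Du₀ x‖ ^ p := setIntegral_congr_set hae_eq
  have htendU : Tendsto (fun k => ∫ x in B k, Ap x * ‖Du₀ x‖ ^ p) atTop
      (𝓝 (∫ x in U, Ap x * ‖Du₀ x‖ ^ p)) := by
    refine tendsto_setIntegral_of_monotone hBm hBmono ?_
    exact hIntOn Du₀ hDu₀ U (hUsub.trans inter_subset_left)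
  rw [hLHS]
  refine le_of_tendsto htendU (Eventually.of_forall fun k => ?_)
  set h : Euc N → Euc N := fun x => (Ap x * ‖Du₀ x‖ ^ (p-2)) • Du₀ x with hh
  have hbase : MemLp (fun x => Lam * ‖Du₀ x‖ ^ (p-1)) (ENNReal.ofReal q) μ := by
    have h1 := hDu₀.norm_rpow_div (ENNReal.ofReal (p-1))
    rw [ENNReal.toReal_ofReal (by linarith : (0:ℝ) ≤ p - 1)] at h1
    have h2 : P / ENNReal.ofReal (p-1) = ENNReal.ofReal q := by
      rw [hP, hq, ENNReal.ofReal_div_of_pos (by linarith : (0:ℝ) < p - 1)]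
    rw [h2] at h1
    exact h1.const_mul Lam
  have hhSM : AEStronglyMeasurable h μ :=
    (hApSM.mul ((hDu₀.1.norm.aemeasurable.pow_const _).aestronglyMeasurable)).smul hDu₀.1
  have hhmem : MemLp h (ENNReal.ofReal q) μ := by
    refine hbase.of_le hhSM ?_
    filter_upwards [hAp] with x hx
    have hA0 : (0:ℝ) ≤ Ap x := le_trans hlam.le hx.1
    have hr0 : (0:ℝ) ≤ ‖Du₀ x‖ ^ (p-2) := Real.rpow_nonneg (norm_nonneg _) _
    have e2 : ‖Du₀ x‖ ^ (p-2) * ‖Du₀ x‖ = ‖Du₀ x‖ ^ (p-1) := by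
      have := rpow_mul_self' (norm_nonneg (Du₀ x)) (q := p-2) (by intro hc; nlinarith)
      rwa [show p-2+1 = p-1 by ring] at this
    have e3 : ‖h x‖ = Ap x * ‖Du₀ x‖ ^ (p-1) := by
      show ‖(Ap x * ‖Du₀ x‖ ^ (p-2)) • Du₀ x‖ = _
      rw [norm_smul, Real.norm_eq_abs, abs_of_nonneg (mul_nonneg hA0 hr0), mul_assoc, e2]
    rw [e3, Real.norm_eq_abs (Lam * _), abs_of_nonneg (mul_nonneg (by linarith : (0:ℝ) ≤ Lam)
      (Real.rpow_nonneg (norm_nonneg _) _))]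
    exact mul_le_mul_of_nonneg_right hx.2 (Real.rpow_nonneg (norm_nonneg _) _)
  set g : Euc N → Euc N := (B k).indicator h with hgdef
  have hgmem : MemLp g (ENNReal.ofReal q) μ := hhmem.indicator (hBm k)
  have hDtend := hweak g hgmem
  have hind : ∀ v : Euc N → Euc N,
      (fun x => ⟪v x, g x⟫) = (B k).indicator (fun x => ⟪v x, h x⟫) := by
    intro v
    funext x
    by_cases hx : x ∈ B k
    · rw [hgdef, indicator_of_mem hx, indicator_of_mem hx]
    · rw [hgdef, indicator_of_notMem hx, indicator_of_notMem hx, inner_zero_right]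
  have hgint : ∀ v : Euc N → Euc N, (∫ x, ⟪v x, g x⟫ ∂μ) = ∫ x in B k, ⟪v x, h x⟫ := by
    intro v
    rw [hind v, integral_indicator (hBm k), hμ, Measure.restrict_restrict (hBm k),
      inter_eq_self_of_subset_left (hBΩ k)]
  have hIOn : ∀ (v : Euc N → Euc N), MemLp v P μ →
      IntegrableOn (fun x => ⟪v x, h x⟫) (B k) volume := by
    intro v hv
    have h2 : Integrable (fun x => ⟪v x, g x⟫) μ := integrable_inner_pair hpq hv hgmem
    rw [hind v, integrable_indicator_iff (hBm k)] at h2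
    rwa [IntegrableOn, hμ, Measure.restrict_restrict (hBm k),
      inter_eq_self_of_subset_left (hBΩ k)] at h2
  have hev : ∀ᶠ n in atTop, B k ⊆ {x | 0 < u n x} := by
    have h5 : ∀ j : ℕ, ∀ᶠ n in atTop, ∀ x ∈ C j, dist (u₀' x) (u' n x) < 1/((k:ℝ)+1) :=
      fun j => (Metric.tendstoUniformlyOn_iff.mp (ht4 j)) (1/((k:ℝ)+1)) (by positivity)
    have h6 : ∀ᶠ n in atTop, ∀ j ∈ Iic k, ∀ x ∈ C j, dist (u₀' x) (u' n x) < 1/((k:ℝ)+1) :=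
      (eventually_all_finite (finite_Iic k)).mpr fun j _ => h5 j
    filter_upwards [h6] with n hn x hx
    obtain ⟨hxA, hxu⟩ := hx
    obtain ⟨j, hj⟩ := mem_iUnion.mp hxA
    obtain ⟨hjk, hxC⟩ := mem_iUnion.mp hj
    have hd := hn j (mem_Iic.mpr hjk) x hxC
    have hxS : x ∈ S := hCS j hxC
    have hux : u n x = u' n x := (hSgood x hxS).2.1 n
    rw [Real.dist_eq] at hd
    have habs := abs_lt.mp hd
    have hxu' : 1/((k:ℝ)+1) < u₀' x := hxu
    show 0 < u n x
    rw [hux]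
    linarith [habs.2]
  set I := ∫ x in B k, Ap x * ‖Du₀ x‖ ^ p with hI
  set D : ℕ → ℝ := fun n => (∫ x, ⟪Du n x, g x⟫ ∂μ) - ∫ x, ⟪Du₀ x, g x⟫ ∂μ with hD
  have hchain : ∀ᶠ n in atTop, I + p * D n ≤ L n := by
    filter_upwards [hev] with n hBsub
    have step1 : ∫ x in B k, Ap x * ‖Du n x‖ ^ p ≤ L n := by
      refine setIntegral_mono_set (hIntOn _ (hDu n) _ inter_subset_left)
        (hnonneg _ _ inter_subset_left) ?_
      exact HasSubset.Subset.eventuallyLE (subset_inter (hBΩ k) hBsub)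
    refine le_trans ?_ step1
    have hint2 := hIOn (Du n) (hDu n)
    have hint3 := hIOn Du₀ hDu₀
    have hint1 : IntegrableOn (fun x => Ap x * ‖Du₀ x‖ ^ p) (B k) volume :=
      hIntOn Du₀ hDu₀ _ (hBΩ k)
    have hDval : D n = ∫ x in B k, (⟪Du n x, h x⟫ - ⟪Du₀ x, h x⟫) := by
      rw [hD]
      show (∫ x, ⟪Du n x, g x⟫ ∂μ) - (∫ x, ⟪Du₀ x, g x⟫ ∂μ) = _
      rw [hgint (Du n), hgint Du₀, ← integral_sub hint2 hint3]
    have hcomb : I + p * D n = ∫ x in B k,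
        (Ap x * ‖Du₀ x‖ ^ p + p * (⟪Du n x, h x⟫ - ⟪Du₀ x, h x⟫)) := by
      rw [hDval, hI, ← integral_const_mul]
      exact (integral_add hint1 ((hint2.sub hint3).const_mul p)).symm
    rw [hcomb]
    refine integral_mono_ae (hint1.add ((hint2.sub hint3).const_mul p))
      (hIntOn _ (hDu n) _ (hBΩ k)) ?_
    filter_upwards [(ae_mono (Measure.restrict_mono (hBΩ k) le_rfl)) hApos] with x hA0
    have ht := tangent_ineq hp1 (Du₀ x) (Du n x)
    have hmul := mul_le_mul_of_nonneg_left ht hA0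
    have e4 : ⟪Du n x, h x⟫ = (Ap x * ‖Du₀ x‖ ^ (p-2)) * ⟪Du₀ x, Du n x⟫ := by
      show ⟪Du n x, (Ap x * ‖Du₀ x‖ ^ (p-2)) • Du₀ x⟫ = _
      rw [real_inner_smul_right, real_inner_comm]
    have e5 : ⟪Du₀ x, h x⟫ = (Ap x * ‖Du₀ x‖ ^ (p-2)) * ⟪Du₀ x, Du₀ x⟫ := by
      show ⟪Du₀ x, (Ap x * ‖Du₀ x‖ ^ (p-2)) • Du₀ x⟫ = _
      rw [real_inner_smul_right]
    calc Ap x * ‖Du₀ x‖ ^ p + p * (⟪Du n x, h x⟫ - ⟪Du₀ x, h x⟫)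
        = Ap x * (‖Du₀ x‖ ^ p + p * (‖Du₀ x‖ ^ (p-2) * (⟪Du₀ x, Du n x⟫ - ⟪Du₀ x, Du₀ x⟫))) := by
          rw [e4, e5]; ring
    _ ≤ Ap x * ‖Du n x‖ ^ p := hmul
  have hD0 : Tendsto D atTop (𝓝 0) := by
    rw [hD]
    exact tendsto_sub_nhds_zero_iff.mpr hDtend
  have hIlim : Tendsto (fun n => I + p * D n) atTop (𝓝 I) := by
    have h7 := hD0.const_mul p
    rw [mul_zero] at h7
    have h8 := h7.const_add I
    rw [add_zero] at h8
    exact h8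
  calc I = liminf (fun n => I + p * D n) atTop := hIlim.liminf_eq.symm
  _ ≤ liminf L atTop := liminf_le_liminf hchain hIlim.isBoundedUnder_ge hLcob


end
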